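/- Assume L is a lattice in which every subset bounded above has a least upper bound, with a ℤ-action (f_t)_{t∈ℤ} by order automorphisms that is increasing and cofinal as in the context. Then for every x ∈ L and every k ∈ ℕ, the combinatorial ball of radius k around x in the thickening \hat{L} equals the interval I(f_{−k}(x), f_k(x)) = {y ∈ L : f_{−k}(x) ≤ y ≤ f_k(x)}. -/

import Mathlib

/-- A (connected) graph is Helly if every family of pairwise intersecting combinatorial
balls has a common vertex. -/
def IsHellyGraph {V : Type} (G : SimpleGraph V) : Prop :=
  G.Connected ∧
    ∀ (ι : Type) (x : ι → V) (r : ι → ℕ),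
      (∀ i j, ∃ z, G.dist (x i) z ≤ r i ∧ G.dist (x j) z ≤ r j) →
      ∃ z, ∀ i, G.dist (x i) z ≤ r i

/-- The thickening of a lattice with a `ℤ`-action by order automorphisms:
two distinct elements `x, y` are adjacent when `f (-1) x ≤ y ≤ f 1 x`. -/
def thickening {L : Type} [Lattice L] (f : ℤ → L → L)
    (hmono : ∀ t : ℤ, Monotone (f t))
    (hadd : ∀ (s t : ℤ) (x : L), f (s + t) x = f s (f t x))
    (hzero : ∀ x : L, f 0 x = x) : SimpleGraph L where
  Adj x y := x ≠ y ∧ f (-1) x ≤ y ∧ y ≤ f 1 x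
  symm := by
    constructor
    intro x y h
    obtain ⟨hne, h1, h2⟩ := h
    have e1 : f (-1) (f 1 x) = x := by
      have h0 : ((-1 : ℤ) + 1) = 0 := by norm_num
      rw [← hadd, h0, hzero]
    have e2 : f 1 (f (-1) x) = x := by
      have h0 : ((1 : ℤ) + -1) = 0 := by norm_num
      rw [← hadd, h0, hzero]
    refine ⟨hne.symm, ?_, ?_⟩
    · have h := hmono (-1) h2
      rwa [e1] at h
    · have h := hmono 1 h1
      rwa [e2] at h
  loopless := ⟨fun x h => h.1 rfl⟩

section Aux

variable {L : Type} [Lattice L] (f : ℤ → L → L)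
    (hmono : ∀ t : ℤ, Monotone (f t))
    (hadd : ∀ (s t : ℤ) (x : L), f (s + t) x = f s (f t x))
    (hzero : ∀ x : L, f 0 x = x)
    (hincr : ∀ t : ℤ, 0 < t → ∀ x : L, x < f t x)

include hmono hadd hincr in
lemma f_le_f (s t : ℤ) (hst : s ≤ t) (x : L) : f s x ≤ f t x := by
  rcases eq_or_lt_of_le hst with rfl | h
  · exact le_rfl
  · have h1 : x ≤ f (t - s) x := (hincr _ (by omega) x).le
    have h2 := hmono s h1
    rwa [← hadd, show s + (t - s) = t by ring] at h2

include hincr in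
lemma exists_walk (x : L) : ∀ (k : ℕ) (y : L), f (-(k : ℤ)) x ≤ y → y ≤ f (k : ℤ) x →
    ∃ p : (thickening f hmono hadd hzero).Walk x y, p.length ≤ k := by
  intro k
  induction k with
  | zero =>
    intro y h1 h2
    have hy : y = x := le_antisymm (by simpa [hzero] using h2) (by simpa [hzero] using h1)
    subst hy
    exact ⟨.nil, by simp⟩
  | succ k ih =>
    intro y h1 h2
    push_cast at h1 h2
    set z := (f (-1) y ⊔ f (-(k : ℤ)) x) ⊓ f (k : ℤ) x with hzdef
    have hkk : f (-(k : ℤ)) x ≤ f (k : ℤ) x := f_le_f f hmono hadd hincr _ _ (by omega) x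
    have hz1 : f (-(k : ℤ)) x ≤ z := le_inf le_sup_right hkk
    have hz2 : z ≤ f (k : ℤ) x := inf_le_right
    obtain ⟨p, hp⟩ := ih z hz1 hz2
    have a1 : f (-1) y ≤ z := by
      refine le_inf le_sup_left ?_
      have h3 := hmono (-1) h2
      rwa [← hadd, show (-1 + ((k : ℤ) + 1)) = (k : ℤ) by ring] at h3
    have a2 : z ≤ f 1 y := by
      refine le_trans inf_le_left (sup_le ?_ ?_)
      · exact f_le_f f hmono hadd hincr (-1) 1 (by omega) y
      · have h3 := hmono 1 h1
        rwa [← hadd, show (1 + -((k : ℤ) + 1)) = -(k : ℤ) by ring] at h3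
    by_cases hzy : z = y
    · exact ⟨p.copy rfl hzy, by rw [SimpleGraph.Walk.length_copy]; omega⟩
    · have hadj : (thickening f hmono hadd hzero).Adj y z := ⟨fun h => hzy h.symm, a1, a2⟩
      refine ⟨p.concat hadj.symm, ?_⟩
      simp only [SimpleGraph.Walk.length_concat]
      omega

lemma walk_bounds : ∀ (x y : L) (p : (thickening f hmono hadd hzero).Walk x y),
    f (-(p.length : ℤ)) x ≤ y ∧ y ≤ f (p.length : ℤ) x := by
  intro x y p
  induction p with
  | nil => simp [hzero]
  | @cons u v w h q ih =>
    obtain ⟨_, h1, h2⟩ := id h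
    obtain ⟨ih1, ih2⟩ := ih
    simp only [SimpleGraph.Walk.length_cons]
    push_cast
    constructor
    · have h3 := hmono (-(q.length : ℤ)) h1
      rw [← hadd, show (-(q.length : ℤ) + -1) = -((q.length : ℤ) + 1) by ring] at h3
      exact le_trans h3 ih1
    · have h3 := hmono ((q.length : ℤ)) h2
      rw [← hadd] at h3
      exact le_trans ih2 h3

end Aux

/-- In the thickening of a lattice with a suitable increasing cofinal `ℤ`-action,
the combinatorial ball of radius `k` around `x` is the interval `[f (-k) x, f k x]`. -/
theorem stmt4 (L : Type) [Lattice L] (f : ℤ → L → L)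
    (hmono : ∀ t : ℤ, Monotone (f t))
    (hadd : ∀ (s t : ℤ) (x : L), f (s + t) x = f s (f t x))
    (hzero : ∀ x : L, f 0 x = x)
    (hincr : ∀ t : ℤ, 0 < t → ∀ x : L, x < f t x)
    (hcof : ∀ x y : L, ∃ t : ℕ, f (-(t : ℤ)) x ≤ y ∧ y ≤ f (t : ℤ) x)
    (hlub : ∀ s : Set L, s.Nonempty → BddAbove s → ∃ a, IsLUB s a)
    (x : L) (k : ℕ) :
    {y : L | (thickening f hmono hadd hzero).dist x y ≤ k} =
      Set.Icc (f (-(k : ℤ)) x) (f (k : ℤ) x) := by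
  ext y
  simp only [Set.mem_setOf_eq, Set.mem_Icc]
  constructor
  · intro hd
    obtain ⟨t, ht1, ht2⟩ := hcof x y
    obtain ⟨q, _⟩ := exists_walk f hmono hadd hzero hincr x t y ht1 ht2
    have hreach : (thickening f hmono hadd hzero).Reachable x y := ⟨q⟩
    obtain ⟨p, hp⟩ := hreach.exists_walk_length_eq_dist
    obtain ⟨hb1, hb2⟩ := walk_bounds f hmono hadd hzero x y p
    rw [hp] at hb1 hb2
    have hlen : ((thickening f hmono hadd hzero).dist x y : ℤ) ≤ (k : ℤ) := by
      exact_mod_cast hd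
    constructor
    · exact le_trans (f_le_f f hmono hadd hincr _ _ (by omega) x) hb1
    · exact le_trans hb2 (f_le_f f hmono hadd hincr _ _ hlen x)
  · rintro ⟨h1, h2⟩
    obtain ⟨p, hp⟩ := exists_walk f hmono hadd hzero hincr x k y h1 h2
    exact le_trans (SimpleGraph.dist_le p) hp
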